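/- Let c = (c₂,…,c_{m+1}) be a children sequence with Σ_j c_j = m − 1, let π be a uniform random permutation, set S(j) = Σ_{i=1}^j (c_{π(i)} − 1), let i₀ be the location of the first minimum of S, and let the excursion walk be S^exc(j) = Σ_{i=1}^j (c_{π(i₀+i)} − 1) (indices mod m). Then the labeled plane tree T^lab whose Łukasiewicz walk is S^exc is uniformly distributed over the set of plane trees on m labeled vertices in which vertex j has exactly c_j children; its probability of equaling any fixed such tree is 1/(m−1)!. -/

import Mathlib

open scoped BigOperators Classical
open Filter MeasureTheory

namespace Paper

inductive PlaneTree : Type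
  | node : List PlaneTree → PlaneTree

namespace PlaneTree

def deg : PlaneTree → ℕ
  | node ts => ts.length

mutual
  def pos : PlaneTree → List (List ℕ)
    | node ts => [] :: posF 0 ts
  def posF : ℕ → List PlaneTree → List (List ℕ)
    | _, [] => []
    | i, t :: ts => (pos t).map (fun q => i :: q) ++ posF (i + 1) ts
end

mutual
  def dfsDeg : PlaneTree → List ℕ
    | node ts => ts.length :: dfsDegF ts
  def dfsDegF : List PlaneTree → List ℕ
    | [] => []
    | t :: ts => dfsDeg t ++ dfsDegF ts
end

def subtreeAt : PlaneTree → List ℕ → Option PlaneTree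
  | t, [] => some t
  | node ts, i :: p =>
    match ts[i]? with
    | some t' => subtreeAt t' p
    | none => none

def numChild (t : PlaneTree) (p : List ℕ) : ℕ := ((subtreeAt t p).map deg).getD 0

def IsVertex (t : PlaneTree) (p : List ℕ) : Prop := (subtreeAt t p).isSome

def IsLeaf (t : PlaneTree) (p : List ℕ) : Prop := (subtreeAt t p).isSome ∧ numChild t p = 0

/-- number of vertices of `t` having exactly `i` children (empirical children distribution) -/
def ecd (t : PlaneTree) (i : ℕ) : ℕ :=
  ((pos t).filter fun p => decide (numChild t p = i)).length

/-- ECD of a plane forest with ranked roots -/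
def ecdF (f : List PlaneTree) (i : ℕ) : ℕ := (f.map fun t => ecd t i).sum

/-- number of children of the `j`-th root of a forest -/
def rootDeg (f : List PlaneTree) (j : ℕ) : ℕ := deg (f.getD j (node []))

/-- the set of plane forests with ranked roots with ECD `s` -/
def forestSet (s : ℕ → ℕ) : Set (List PlaneTree) := {f | ∀ i, ecdF f i = s i}

/-- the set of plane trees with ECD `s` -/
def treeSet (s : ℕ → ℕ) : Set PlaneTree := {t | ∀ i, ecd t i = s i}

/-- strict depth-first (preorder) order on positions -/
def dfLT (p q : List ℕ) : Prop := List.Lex (· < ·) p q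

def parent (p : List ℕ) : List ℕ := p.dropLast

/-- `q` is a strict ancestor of `p`, i.e. `q ∈ [ρ, p)` -/
def StrictAnc (q p : List ℕ) : Prop := q <+: p ∧ q ≠ p

/-- admissible (ordered) pair of leaves -/
def Admissible (t : PlaneTree) (u v : List ℕ) : Prop :=
  IsLeaf t u ∧ IsLeaf t v ∧ 2 ≤ v.length ∧
    StrictAnc (parent (parent v)) (parent u) ∧ dfLT (parent u) (parent v)

def ASet (t : PlaneTree) : Set (List ℕ × List ℕ) := {uv | Admissible t uv.1 uv.2}

def fA (t : PlaneTree) (u : List ℕ) : Set (List ℕ) := {v | Admissible t u v}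

def B2 (t : PlaneTree) (u : List ℕ) : Set (List ℕ) :=
  {v | IsVertex t v ∧ 2 ≤ v.length ∧ StrictAnc (parent (parent v)) u}

noncomputable def leafFinset (t : PlaneTree) : Finset (List ℕ) :=
  ((pos t).toFinset).filter fun p => IsLeaf t p

def leafOf {k : ℕ} (w : Fin k → List ℕ × List ℕ) (y : Fin k × Bool) : List ℕ :=
  if y.2 then (w y.1).1 else (w y.1).2

/-- ordered `k`-tuples of admissible pairs using `2k` distinct leaves -/
def AkOrd (t : PlaneTree) (k : ℕ) : Set (Fin k → List ℕ × List ℕ) :=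
  {w | (∀ a, Admissible t (w a).1 (w a).2) ∧ Function.Injective (leafOf w)}

/-- unordered collections of `k` admissible pairs using `2k` distinct leaves -/
def Ak (t : PlaneTree) (k : ℕ) : Set (Finset (List ℕ × List ℕ)) :=
  {x | x.card = k ∧ (∀ uv ∈ x, Admissible t uv.1 uv.2) ∧
    Set.InjOn (fun y : (List ℕ × List ℕ) × Bool => if y.2 then y.1.1 else y.1.2)
      {y | y.1 ∈ x}}

/-- the set `T_s^(k)` of pairs of a plane tree with ECD `s` and a set of `k` admissible pairs -/
def Tsk (s : ℕ → ℕ) (k : ℕ) : Set (PlaneTree × Finset (List ℕ × List ℕ)) :=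
  {tx | (∀ i, ecd tx.1 i = s i) ∧ tx.2 ∈ Ak tx.1 k}

end PlaneTree

/-- labeled plane trees -/
inductive LTree : Type
  | node : ℕ → List LTree → LTree

namespace LTree

mutual
  def shape : LTree → PlaneTree
    | node _ ts => .node (shapeF ts)
  def shapeF : List LTree → List PlaneTree
    | [] => []
    | t :: ts => shape t :: shapeF ts
end

mutual
  def dfsLab : LTree → List ℕ
    | node a ts => a :: dfsLabF ts
  def dfsLabF : List LTree → List ℕ
    | [] => []
    | t :: ts => dfsLab t ++ dfsLabF ts
end

mutual
  def dfsDeg : LTree → List ℕ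
    | node _ ts => ts.length :: dfsDegF ts
  def dfsDegF : List LTree → List ℕ
    | [] => []
    | t :: ts => dfsDeg t ++ dfsDegF ts
end

def subtreeAt : LTree → List ℕ → Option LTree
  | t, [] => some t
  | node _ ts, i :: p =>
    match ts[i]? with
    | some t' => subtreeAt t' p
    | none => none

def labelAt (t : LTree) (p : List ℕ) : ℕ :=
  ((subtreeAt t p).map fun u => match u with | node a _ => a).getD 0

end LTree

/-- partial-sum steps of the permuted walk -/
def steps {m : ℕ} (c : Fin m → ℕ) (π : Equiv.Perm (Fin m)) : List ℤ :=
  List.ofFn fun i => (c (π i) : ℤ) - 1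

/-- first index `j ∈ [1, length]` at which the partial sums attain their minimum -/
noncomputable def firstMinIdx (l : List ℤ) : ℕ :=
  (((Finset.Icc 1 l.length).filter fun j =>
      ∀ j' ∈ Finset.Icc 1 l.length, (l.take j).sum ≤ (l.take j').sum).min).untopD 0

/-- the DFS vertex sequence obtained by rotating the uniformly permuted vertex
sequence at the first minimum of its Łukasiewicz-type walk (Vervaat transform) -/
noncomputable def rotSeq {m : ℕ} (c : Fin m → ℕ) (π : Equiv.Perm (Fin m)) : List (Fin m) :=
  (List.ofFn fun i => π i).rotate (firstMinIdx (steps c π))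

/-- the degree of a vertex in a (simple) edge set -/
def degIn (E : Finset (Sym2 ℕ)) (v : ℕ) : ℕ := (E.filter fun e => v ∈ e).card

/-- degree of a vertex in a multigraph given by an edge multiset (loops count twice) -/
def mdeg (E : Multiset (Sym2 ℕ)) (v : ℕ) : ℕ :=
  (E.map fun e => (if v ∈ e then 1 else 0) + (if e = s(v, v) then 1 else 0)).sum

/-- connectivity of a (multi)graph on vertex set `V` with edges `E` -/
def ConnOn (V : Finset ℕ) (E : Set (Sym2 ℕ)) : Prop :=
  ∀ a ∈ V, ∀ b ∈ V, Relation.ReflTransGen (fun a b => s(a, b) ∈ E) a b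

/-- the set of simple connected labeled graphs on `{1, …, m}` with degree sequence `d` -/
def GconSet (m : ℕ) (d : ℕ → ℕ) : Set (Finset (Sym2 ℕ)) :=
  {E | (∀ e ∈ E, ¬ e.IsDiag) ∧ (∀ e ∈ E, ∀ v ∈ e, v ∈ Finset.Icc 1 m) ∧
       (∀ v ∈ Finset.Icc 1 m, degIn E v = d v) ∧ ConnOn (Finset.Icc 1 m) (E : Set (Sym2 ℕ))}

/-- ECD of the children sequence `(d̃₂ − 1, …, d̃_{m̃} − 1, 0, …, 0)` (with `2k` zeros) -/
def ecdFromDeg (m k : ℕ) (d : ℕ → ℕ) (i : ℕ) : ℕ :=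
  ((Finset.Icc 2 m).filter fun j => d j = i + 1).card + if i = 0 then 2 * k else 0

/-- `≪` order on admissible pairs -/
def pairLT (a b : List ℕ × List ℕ) : Prop :=
  PlaneTree.dfLT (PlaneTree.parent a.1) (PlaneTree.parent b.1) ∨
    (PlaneTree.parent a.1 = PlaneTree.parent b.1 ∧
      PlaneTree.dfLT (PlaneTree.parent a.2) (PlaneTree.parent b.2))

/-- labeled elements of `T_s^(k)` as in the sampling algorithm: a labeled plane tree whose
labels are `{2, …, m̃ + 2k}`, in which the vertex labeled `j ≤ m̃` has `d̃_j − 1` children and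
the vertices labeled `> m̃` are leaves, together with a `≪`-increasing tuple of `k` admissible
pairs of leaves with distinct leaves, the `j`-th pair carrying labels `(m̃+2j−1, m̃+2j)`. -/
def IsLabeledElement (m k : ℕ) (d : ℕ → ℕ) (t : LTree)
    (x : Fin k → List ℕ × List ℕ) : Prop :=
  (LTree.dfsLab t).Perm (List.range' 2 (m - 1 + 2 * k)) ∧
  (∀ p ∈ PlaneTree.pos (LTree.shape t),
    PlaneTree.numChild (LTree.shape t) p =
      (if 2 ≤ LTree.labelAt t p ∧ LTree.labelAt t p ≤ m then d (LTree.labelAt t p) - 1 else 0)) ∧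
  (∀ j, PlaneTree.Admissible (LTree.shape t) (x j).1 (x j).2) ∧
  Function.Injective (PlaneTree.leafOf x) ∧
  (∀ j j' : Fin k, j < j' → pairLT (x j) (x j')) ∧
  (∀ j : Fin k, LTree.labelAt t (x j).1 = m + 2 * (j : ℕ) + 1 ∧
      LTree.labelAt t (x j).2 = m + 2 * (j : ℕ) + 2)

/-- the edge multiset of the graph `I(t, x)`: tree edges, with the leaves of the admissible
pairs deleted and an edge joining the two parents of each admissible pair added -/
noncomputable def Iedges (t : LTree) {k : ℕ} (x : Fin k → List ℕ × List ℕ) :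
    Multiset (Sym2 ℕ) :=
  (↑(((PlaneTree.pos (LTree.shape t)).filter fun p =>
        decide (p ≠ ([] : List ℕ) ∧ ∀ j, p ≠ (x j).1 ∧ p ≠ (x j).2)).map
      fun p => s(LTree.labelAt t (PlaneTree.parent p), LTree.labelAt t p)) : Multiset (Sym2 ℕ))
  + ↑(List.ofFn fun j =>
      s(LTree.labelAt t (PlaneTree.parent (x j).1), LTree.labelAt t (PlaneTree.parent (x j).2)))

/- Brownian excursion: Gaussian/Bessel kernels and finite-dimensional densities -/
noncomputable def gaussD (s x : ℝ) : ℝ := Real.exp (-(x ^ 2) / (2 * s)) / Real.sqrt (2 * Real.pi * s)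

noncomputable def killedK (s x y : ℝ) : ℝ := gaussD s (y - x) - gaussD s (y + x)

noncomputable def bes3K (s x y : ℝ) : ℝ := (y / x) * killedK s x y

noncomputable def exStart (t x : ℝ) : ℝ :=
  Real.sqrt (2 / Real.pi) * x ^ 2 * t ^ (-(3 : ℝ) / 2) * Real.exp (-(x ^ 2) / (2 * t))

noncomputable def exEnd (s x : ℝ) : ℝ := (2 / s) * gaussD s x

/-- finite-dimensional density of the standard Brownian excursion at times `t 0 < … < t n` -/
noncomputable def exFdd {n : ℕ} (t : Fin (n + 1) → ℝ) (x : Fin (n + 1) → ℝ) : ℝ :=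
  if ∀ i, 0 < x i then
    Real.sqrt (Real.pi / 2) * exStart (t 0) (x 0) *
      (∏ i : Fin n, bes3K (t i.succ - t i.castSucc) (x i.castSucc) (x i.succ)) *
      exEnd (1 - t (Fin.last n)) (x (Fin.last n))
  else 0

/-- `e` is a standard Brownian excursion on `[0,1]`: continuous nonnegative paths vanishing at
the endpoints, positive inside, with the excursion finite-dimensional densities. -/
def IsStdBrownianExcursion {Ω : Type*} [MeasureSpace Ω] (e : Ω → ℝ → ℝ) : Prop :=
  (∀ ω, Continuous (e ω)) ∧ (∀ ω, e ω 0 = 0) ∧ (∀ ω, e ω 1 = 0) ∧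
  (∀ ω, ∀ x ∈ Set.Ioo (0 : ℝ) 1, 0 < e ω x) ∧
  (∀ t : ℝ, Measurable fun ω => e ω t) ∧
  ∀ (n : ℕ) (t : Fin (n + 1) → ℝ), StrictMono t → 0 < t 0 → t (Fin.last n) < 1 →
    Measure.map (fun ω i => e ω (t i)) (volume : Measure Ω)
      = volume.withDensity fun x => ENNReal.ofReal (exFdd t x)

/-- `j`-th smallest value (0-based) among `ω 0, …, ω (m−1)` -/
noncomputable def orderStat {m : ℕ} (ω : Fin m → ℝ) (j : ℕ) : ℝ :=
  ((Multiset.map ω Finset.univ.val).sort (· ≤ ·)).getD j 0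

/-! ### auxiliary lemmas for the Vervaat theorem -/

namespace Vervaat

def g (l : List ℕ) : ℤ := (l.sum : ℤ) - l.length

theorem g_append (l1 l2 : List ℕ) : g (l1 ++ l2) = g l1 + g l2 := by
  simp [g]; ring

theorem g_cons (a : ℕ) (l : List ℕ) : g (a :: l) = (a : ℤ) - 1 + g l := by
  simp [g]; ring

theorem gsum (l : List ℕ) : (l.map fun d : ℕ => (d : ℤ) - 1).sum = g l := by
  induction l with
  | nil => simp [g]
  | cons a l ih => rw [List.map_cons, List.sum_cons, ih, g_cons]

open LTree in
mutual
theorem walk_deg (t : LTree) :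
    g (dfsDeg t) = -1 ∧ ∀ j < (dfsDeg t).length, 0 ≤ g ((dfsDeg t).take j) := by
  match t with
  | .node a ts =>
    have h := walk_degF ts
    have e : dfsDeg (.node a ts) = ts.length :: dfsDegF ts := rfl
    constructor
    · rw [e, g_cons, h.1]; ring
    · intro j hj
      match j with
      | 0 => simp [g]
      | j + 1 =>
        rw [e, List.take_succ_cons, g_cons]
        have hj' : j < (dfsDegF ts).length := by
          rw [e] at hj; simpa using hj
        have := h.2 j hj'
        omega
theorem walk_degF (f : List LTree) :
    g (dfsDegF f) = -(f.length) ∧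
      ∀ j < (dfsDegF f).length, -(f.length : ℤ) < g ((dfsDegF f).take j) := by
  match f with
  | [] => simp [dfsDegF, g]
  | t :: ts =>
    have h1 := walk_deg t
    have h2 := walk_degF ts
    have e : dfsDegF (t :: ts) = dfsDeg t ++ dfsDegF ts := rfl
    have elen : (((t :: ts).length : ℕ) : ℤ) = (ts.length : ℤ) + 1 := by
      push_cast [List.length_cons]; ring
    constructor
    · rw [e, g_append, h1.1, h2.1, elen]; ring
    · intro j hj
      rw [e, List.take_append, g_append, elen]
      rcases lt_or_ge j (dfsDeg t).length with hlt | hge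
      · have h0 : (dfsDegF ts).take (j - (dfsDeg t).length) = [] := by
          simp [Nat.sub_eq_zero_of_le (le_of_lt hlt)]
        rw [h0]
        have := h1.2 j hlt
        have hts : (0:ℤ) ≤ ts.length := by positivity
        have hnil : g [] = 0 := by simp [g]
        omega
      · rw [List.take_of_length_le hge, h1.1]
        have hj2 : j - (dfsDeg t).length < (dfsDegF ts).length := by
          rw [e, List.length_append] at hj; omega
        have := h2.2 _ hj2
        omega
end

open LTree in
mutual
theorem len_deg (t : LTree) : (dfsDeg t).length = (dfsLab t).length := by
  match t with
  | .node a ts =>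
    show (ts.length :: dfsDegF ts).length = (a :: dfsLabF ts).length
    simp [len_degF ts]
theorem len_degF (f : List LTree) : (dfsDegF f).length = (dfsLabF f).length := by
  match f with
  | [] => rfl
  | t :: ts =>
    show (dfsDeg t ++ dfsDegF ts).length = (dfsLab t ++ dfsLabF ts).length
    simp [len_deg t, len_degF ts]
end


theorem coe_list_fin {m : ℕ} (l : List (Fin m)) :
    (l.map (fun i => (i : ℕ))) = l.map Fin.val := by
  simp only [bind_pure_comp, List.map_eq_map, List.map_id, List.map_id']

theorem firstMinIdx_eq (l : List ℤ) (r : ℕ) (hr : r ∈ Finset.Icc 1 l.length)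
    (hmin : ∀ j' ∈ Finset.Icc 1 l.length, (l.take r).sum ≤ (l.take j').sum)
    (hfirst : ∀ x ∈ Finset.Icc 1 l.length,
      (∀ j' ∈ Finset.Icc 1 l.length, (l.take x).sum ≤ (l.take j').sum) → r ≤ x) :
    firstMinIdx l = r := by
  unfold firstMinIdx
  have h1 : (@Finset.filter ℕ
      (fun j => ∀ j' ∈ Finset.Icc 1 l.length, (l.take j).sum ≤ (l.take j').sum)
      (fun a => Classical.propDecidable _)
      (Finset.Icc 1 l.length)).min
      = (r : WithTop ℕ) := by
    apply le_antisymm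
    · exact Finset.min_le
        ((@Finset.mem_filter ℕ _ (fun a => Classical.propDecidable _) _ _).mpr ⟨hr, hmin⟩)
    · refine Finset.le_min fun y hy => ?_
      obtain ⟨hy1, hy2⟩ :=
        (@Finset.mem_filter ℕ _ (fun a => Classical.propDecidable _) _ _).mp hy
      exact WithTop.coe_le_coe.mpr (hfirst y hy1 hy2)
  rw [h1]
  rfl

end Vervaat

end Paper

open Paper in
/-- the labeled plane tree whose Łukasiewicz walk is the Vervaat transform of
the uniformly permuted walk is uniform over labeled plane trees with children assignment `c`:
each such tree arises with probability `1/(m−1)!`. -/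
theorem vervaat_gives_uniform_labeled_tree (m : ℕ) (hm : 1 ≤ m) (c : Fin m → ℕ)
    (hc : (∑ i, c i) + 1 = m) (t : LTree)
    (hlab : (LTree.dfsLab t).Perm (List.ofFn fun i : Fin m => (i : ℕ)))
    (hdeg : LTree.dfsDeg t =
      (LTree.dfsLab t).map fun a => if h : a < m then c ⟨a, h⟩ else 0) :
    {π : Equiv.Perm (Fin m) |
        LTree.dfsLab t = (rotSeq c π).map (fun i => (i : ℕ)) ∧
          LTree.dfsDeg t = (rotSeq c π).map fun i => c i}.ncard
      * Nat.factorial (m - 1) = Nat.factorial m := by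
  classical
  simp only [Vervaat.coe_list_fin]
  -- basic facts about dfsLab
  have hofn : (List.ofFn fun i : Fin m => (i : ℕ)) = List.range m := by
    rw [List.ofFn_eq_map]
    exact List.ext_getElem (by simp) (by simp)
  have hlen_lab : (LTree.dfsLab t).length = m := by
    have := hlab.length_eq; simpa using this
  have hmem : ∀ a ∈ LTree.dfsLab t, a < m := by
    intro a ha
    have h1 : a ∈ (List.ofFn fun i : Fin m => (i : ℕ)) := hlab.mem_iff.mp ha
    rw [hofn] at h1
    simpa using h1
  have hnodup : (LTree.dfsLab t).Nodup := by
    refine hlab.nodup_iff.mpr ?_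
    rw [hofn]; exact List.nodup_range
  set L : List (Fin m) := (LTree.dfsLab t).pmap (fun a h => (⟨a, h⟩ : Fin m)) hmem with hLdef
  have hLval : L.map Fin.val = LTree.dfsLab t := by
    rw [hLdef, List.map_pmap]
    exact List.pmap_eq_map hmem ▸ (List.map_id _)
  have hLlen : L.length = m := by
    have := congrArg List.length hLval
    simpa [hlen_lab] using this
  have hLnodup : L.Nodup := by
    have : (L.map Fin.val).Nodup := hLval ▸ hnodup
    exact this.of_map _
  have hdegL : LTree.dfsDeg t = L.map fun x => c x := by
    rw [hdeg, ← hLval, List.map_map]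
    congr 1
    funext x
    simp [Function.comp, x.isLt]
  -- the Łukasiewicz walk
  set w : List ℤ := L.map (fun x => (c x : ℤ) - 1) with hwdef
  have hw : w = (LTree.dfsDeg t).map fun d : ℕ => (d : ℤ) - 1 := by
    rw [hdegL, List.map_map]; rfl
  have hwlen : w.length = m := by rw [hwdef]; simp [hLlen]
  set S : ℕ → ℤ := fun j => (w.take j).sum with hSdef
  have hlen_deg : (LTree.dfsDeg t).length = m := (Vervaat.len_deg t).trans hlen_lab
  have hSg : ∀ j, S j = Vervaat.g ((LTree.dfsDeg t).take j) := by
    intro j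
    rw [hSdef]; dsimp only
    rw [hw, ← List.map_take, Vervaat.gsum]
  have hS0 : ∀ j < m, 0 ≤ S j := by
    intro j hj; rw [hSg]; exact (Vervaat.walk_deg t).2 j (by omega)
  have hSm : S m = -1 := by
    rw [hSg, ← hlen_deg, List.take_length]
    exact (Vervaat.walk_deg t).1
  have hSle : ∀ j ≤ m, -1 ≤ S j := by
    intro j hj
    rcases eq_or_lt_of_le hj with rfl | h
    · rw [hSm]
    · linarith [hS0 j h]
  have hSw : ∀ v, S v = (w.take v).sum := fun v => rfl
  have hSmw : S m = w.sum := by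
    rw [hSw, ← hwlen, List.take_length]
  -- rotated partial sums
  have hrot1 : ∀ v ≤ m, ∀ j ≤ m - v, ((w.rotate v).take j).sum = S (v + j) - S v := by
    intro v hv j hj
    rw [List.rotate_eq_drop_append_take (by omega : v ≤ w.length)]
    have hdl : (w.drop v).length = m - v := by simp [hwlen]
    have h0 : j - (w.drop v).length = 0 := by omega
    rw [List.take_append, h0, List.take_zero, List.append_nil]
    have h2 : S (v + j) = S v + ((w.drop v).take j).sum := by
      rw [hSw, hSw, List.take_add, List.sum_append]
    omega
  have hrot2 : ∀ v ≤ m, ∀ j, m - v ≤ j → j ≤ m → ((w.rotate v).take j).sum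
      = -1 - S v + S (j - (m - v)) := by
    intro v hv j hj1 hj2
    rw [List.rotate_eq_drop_append_take (by omega : v ≤ w.length)]
    have hdl : (w.drop v).length = m - v := by simp [hwlen]
    rw [List.take_append, List.take_of_length_le (by omega), hdl,
      List.take_take, List.sum_append]
    have hmin : (j - (m - v)) ⊓ v = j - (m - v) := by
      apply min_eq_left; omega
    rw [hmin]
    have hsum : (w.take v).sum + (w.drop v).sum = w.sum := by
      rw [← List.sum_append, List.take_append_drop]
    have h3 : S (j - (m - v)) = (w.take (j - (m - v))).sum := hSw _
    have h4 : S v = (w.take v).sum := hSw v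
    omega
  -- the family of permutations
  have hrotlen : ∀ v : ℕ, (L.rotate v).length = m := fun v => by simp [hLlen]
  have hrotnd : ∀ v : ℕ, (L.rotate v).Nodup := fun v => List.nodup_rotate.mpr hLnodup
  let e : Fin m → Equiv.Perm (Fin m) := fun v =>
    Equiv.ofBijective (fun i => (L.rotate (v : ℕ)).get (Fin.cast (hrotlen (v : ℕ)).symm i))
      (Finite.injective_iff_bijective.mp (by
        intro i j hij
        have h1 := List.nodup_iff_injective_get.mp (hrotnd (v : ℕ)) hij
        have h2 := congrArg Fin.val h1
        exact Fin.ext h2))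
  have hofn_e : ∀ v : Fin m, (List.ofFn fun i => e v i) = L.rotate (v : ℕ) := by
    intro v
    apply List.ext_get (by simp [hrotlen])
    intro n h1 h2
    rw [List.get_ofFn]
    rfl
  have hsteps : ∀ v : Fin m, steps c (e v) = w.rotate (v : ℕ) := by
    intro v
    show (List.ofFn fun i => (c (e v i) : ℤ) - 1) = _
    have h1 : (List.ofFn fun i => (c (e v i) : ℤ) - 1)
        = (List.ofFn fun i => e v i).map (fun x => (c x : ℤ) - 1) := by
      rw [List.map_ofFn]; rfl
    rw [h1, hofn_e v, hwdef, List.map_rotate]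
  -- the first-minimum computation
  have hfirst : ∀ v : Fin m, firstMinIdx (w.rotate (v : ℕ)) = m - (v : ℕ) := by
    intro v
    have hv : (v : ℕ) < m := v.isLt
    have hlen : (w.rotate (v : ℕ)).length = m := by simp [hwlen]
    have hTmin : ∀ j' ∈ Finset.Icc 1 m, -1 - S (v : ℕ) ≤ ((w.rotate (v : ℕ)).take j').sum := by
      intro j' hj'
      obtain ⟨hj1, hj2⟩ := Finset.mem_Icc.mp hj'
      rcases le_or_gt j' (m - (v : ℕ)) with h | h
      · rw [hrot1 (v : ℕ) (le_of_lt hv) j' h]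
        have := hSle ((v : ℕ) + j') (by omega)
        omega
      · rw [hrot2 (v : ℕ) (le_of_lt hv) j' (le_of_lt h) hj2]
        have := hS0 (j' - (m - (v : ℕ))) (by omega)
        omega
    have hTeq : ((w.rotate (v : ℕ)).take (m - (v : ℕ))).sum = -1 - S (v : ℕ) := by
      rw [hrot1 (v : ℕ) (le_of_lt hv) (m - (v : ℕ)) le_rfl,
        Nat.add_sub_cancel' (le_of_lt hv), hSm]
    have hstrict : ∀ j, 1 ≤ j → j < m - (v : ℕ) →
        -1 - S (v : ℕ) < ((w.rotate (v : ℕ)).take j).sum := by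
      intro j h1 h2
      rw [hrot1 (v : ℕ) (le_of_lt hv) j (le_of_lt h2)]
      have := hS0 ((v : ℕ) + j) (by omega)
      omega
    have hmem0 : m - (v : ℕ) ∈ Finset.Icc 1 (w.rotate (v : ℕ)).length := by
      rw [hlen, Finset.mem_Icc]; omega
    refine Vervaat.firstMinIdx_eq _ _ hmem0 ?_ ?_
    · intro j' hj'
      rw [hlen] at hj'
      exact hTeq ▸ hTmin j' hj'
    · intro x hx hx2
      rw [hlen] at hx
      by_contra hcon
      push_neg at hcon
      have h1x : 1 ≤ x := (Finset.mem_Icc.mp hx).1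
      have hle := hx2 (m - (v : ℕ)) (by rw [hlen]; exact Finset.mem_Icc.mpr (by omega))
      have hgt := hstrict x h1x hcon
      rw [hTeq] at hle
      omega
  have hrotseq : ∀ v : Fin m, rotSeq c (e v) = L := by
    intro v
    unfold rotSeq
    have hvm : (v : ℕ) + (m - (v : ℕ)) = m := Nat.add_sub_cancel' (le_of_lt v.isLt)
    have hrl := List.rotate_length L
    rw [hLlen] at hrl
    rw [hsteps v, hfirst v, hofn_e v, List.rotate_rotate, hvm, hrl]
  -- the set is the range of e
  have hset : {π : Equiv.Perm (Fin m) |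
      LTree.dfsLab t = (rotSeq c π).map Fin.val ∧
        LTree.dfsDeg t = (rotSeq c π).map fun i => c i} = Set.range e := by
    ext π
    simp only [Set.mem_setOf_eq, Set.mem_range]
    constructor
    · rintro ⟨h1, h2⟩
      have hrotk : rotSeq c π = L := by
        apply List.map_injective_iff.mpr Fin.val_injective
        rw [hLval, ← h1]
      have hk : (List.ofFn fun i => π i)
          = L.rotate (m - firstMinIdx (steps c π) % m) := by
        have := List.rotate_eq_iff.mp hrotk
        rwa [hLlen] at this
      set v0 : ℕ := (m - firstMinIdx (steps c π) % m) % m with hv0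
      have hv0lt : v0 < m := Nat.mod_lt _ (by omega)
      have hk2 : (List.ofFn fun i => π i) = L.rotate v0 := by
        have h5 := List.rotate_mod L (m - firstMinIdx (steps c π) % m)
        rw [hLlen] at h5
        exact hk.trans h5.symm
      refine ⟨⟨v0, hv0lt⟩, ?_⟩
      apply Equiv.ext
      intro i
      have hlt1 : (i : ℕ) < (List.ofFn fun j => π j).length := by simp
      have hlt2 : (i : ℕ) < (L.rotate v0).length := by rw [hrotlen]; exact i.isLt
      have h5 : (List.ofFn fun j => π j)[(i : ℕ)]'hlt1 = π i := by
        simp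
      have h7 : (List.ofFn fun j => π j)[(i : ℕ)]'hlt1 = (L.rotate v0)[(i : ℕ)]'hlt2 := by
        simp only [hk2]
      show e ⟨v0, hv0lt⟩ i = π i
      rw [← h5, h7]
      rfl
    · rintro ⟨v, rfl⟩
      rw [hrotseq v, hLval]
      exact ⟨rfl, hdegL⟩
  rw [hset]
  have hinj : Function.Injective e := by
    intro v1 v2 h
    have h' : L.rotate (v1 : ℕ) = L.rotate (v2 : ℕ) := by
      rw [← hofn_e v1, ← hofn_e v2, h]
    have hlt1 : (v1 : ℕ) < L.length := by omega
    have hlt2 : (v2 : ℕ) < L.length := by omega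
    have h1 := List.head?_rotate hlt1
    have h2 := List.head?_rotate hlt2
    rw [h'] at h1
    have h3 : L[(v1 : ℕ)]? = L[(v2 : ℕ)]? := h1.symm.trans h2
    rw [List.getElem?_eq_getElem hlt1, List.getElem?_eq_getElem hlt2] at h3
    have h4 : L[(v1 : ℕ)] = L[(v2 : ℕ)] := Option.some_injective _ h3
    exact Fin.ext ((hLnodup.getElem_inj_iff).mp h4)
  rw [← Set.image_univ, Set.ncard_image_of_injective _ hinj, Set.ncard_univ,
    Nat.card_eq_fintype_card, Fintype.card_fin]
  exact Nat.mul_factorial_pred (by omega)
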